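/- For all integers c ≥ 1 and n ≥ 0, the number of colored involutions of size n is given, as an equality of rational numbers, by r_n^{(c)} = ∑_{0 ≤ k ≤ n, k ≡ n (mod 2)} C(n,k) · (3 + (−1)^c)^k · c^{(n−k)/2} · (n−k)! / ( 2^{(n+k)/2} · ((n−k)/2)! ). -/

import Mathlib

open Finset

/-- The inversion number of a permutation of `Fin n`:
`inv(π) = #{(i,j) : i < j, π(i) > π(j)}`. -/
def invNum {n : ℕ} (π : Equiv.Perm (Fin n)) : ℕ :=
  ((Finset.univ : Finset (Fin n × Fin n)).filter
    (fun p => p.1 < p.2 ∧ π p.2 < π p.1)).card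

/-- The colored inversion statistic on a colored permutation `σ = (π, f)`:
`inv_c(σ) = inv(π) + ∑ f(j) + c·#{(i,j) : i < j, π(i) < π(j), f(j) ≠ 0}`. -/
def invC (c : ℕ) {n : ℕ} (σ : Equiv.Perm (Fin n) × (Fin n → Fin c)) : ℕ :=
  invNum σ.1 + (∑ j, (σ.2 j : ℕ)) +
    c * ((Finset.univ : Finset (Fin n × Fin n)).filter
      (fun p => p.1 < p.2 ∧ σ.1 p.1 < σ.1 p.2 ∧ (σ.2 p.2 : ℕ) ≠ 0)).card

/-- The colored Mahonian number `i_c(n,k)`: the number of colored permutations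
of size `n` with exactly `k` colored inversions. -/
noncomputable def mahonianC (c n k : ℕ) : ℕ :=
  Nat.card {σ : Equiv.Perm (Fin n) × (Fin n → Fin c) // invC c σ = k}

/-- A colored involution: a colored permutation `σ = (π, f)` with `π ∘ π = id`
and `f(i) + f(π(i)) ≡ 0 (mod c)` for every `i`. -/
def IsColoredInvolution {c n : ℕ} (σ : Equiv.Perm (Fin n) × (Fin n → Fin c)) : Prop :=
  σ.1 * σ.1 = 1 ∧ ∀ i, ((σ.2 i : ℕ) + (σ.2 (σ.1 i) : ℕ)) % c = 0

/-- `r_n^{(c)}`: the number of colored involutions of size `n`. -/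
noncomputable def involutionCountC (c n : ℕ) : ℕ :=
  Nat.card {σ : Equiv.Perm (Fin n) × (Fin n → Fin c) // IsColoredInvolution σ}


namespace CIAux

open Equiv

set_option linter.unusedSectionVars false

noncomputable def dd : ℕ → ℚ := fun m => (2*m).factorial / (2^m * m.factorial)

theorem dd_succ (m : ℕ) : dd (m+1) = (2*m+1) * dd m := by
  unfold dd
  have h1 : 2*(m+1) = (2*m+1)+1 := by ring
  rw [h1, Nat.factorial_succ, Nat.factorial_succ, Nat.factorial_succ]
  have h2 : ((2:ℚ))^(m+1) = 2 * 2^m := by ring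
  rw [h2]
  have hf : ((2*m).factorial : ℚ) ≠ 0 := by exact_mod_cast (2*m).factorial_ne_zero
  have hm : ((m).factorial : ℚ) ≠ 0 := by exact_mod_cast m.factorial_ne_zero
  have h2m : ((2:ℚ))^m ≠ 0 := by positivity
  push_cast
  field_simp
  ring

noncomputable def EE (a q : ℚ) (n k : ℕ) : ℚ :=
  if k % 2 = n % 2 ∧ k ≤ n then (n.choose k : ℚ) * a^k * q^((n-k)/2) * dd ((n-k)/2) else 0

theorem choose_id (n k : ℕ) :
    (n+2).choose (k+1) * (n-k) = (n+1).choose k * (n-k) + (n+1) * n.choose (k+1) := by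
  rw [Nat.choose_succ_succ (n+1) k, add_mul]
  congr 1
  have h := Nat.choose_mul_succ_eq n (k+1)
  have h2 : n + 1 - (k+1) = n - k := by omega
  rw [h2] at h
  rw [← h]
  ring

theorem EE_rec (a q : ℚ) (n k : ℕ) :
    EE a q (n+2) (k+1) = a * EE a q (n+1) k + q * (n+1) * EE a q n (k+1) := by
  unfold EE
  by_cases hp : (k+1) % 2 = n % 2
  · have hp1 : (k+1) % 2 = (n+2) % 2 := by omega
    have hp2 : k % 2 = (n+1) % 2 := by omega
    by_cases hb : k + 1 ≤ n
    · obtain ⟨m, hm⟩ : ∃ m, n - (k+1) = 2*m := ⟨(n-(k+1))/2, by omega⟩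
      rw [if_pos ⟨hp1, by omega⟩, if_pos ⟨hp2, by omega⟩, if_pos ⟨hp, hb⟩]
      have e1 : (n+2-(k+1))/2 = m + 1 := by omega
      have e2 : (n+1-k)/2 = m + 1 := by omega
      have e3 : (n-(k+1))/2 = m := by omega
      rw [e1, e2, e3, dd_succ]
      have hcast := congrArg (Nat.cast : ℕ → ℚ) (choose_id n k)
      push_cast [Nat.cast_sub (show k ≤ n by omega)] at hcast
      have e4 : (2*(m:ℚ)+1) = ((n : ℚ) - k) := by
        have h5 : ((2*m+1 : ℕ) : ℚ) = ((n - k : ℕ) : ℚ) := by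
          exact_mod_cast congrArg (Nat.cast : ℕ → ℚ) (show 2*m+1 = n - k by omega)
        rw [Nat.cast_sub (show k ≤ n by omega)] at h5
        push_cast at h5
        linarith
      rw [e4]
      push_cast
      linear_combination (a^(k+1) * q^(m+1) * dd m) * hcast
    · by_cases hb2 : k + 1 = n + 2
      · rw [if_pos ⟨hp1, by omega⟩, if_pos ⟨hp2 , by omega⟩, if_neg (by omega)]
        have hk : k = n + 1 := by omega
        subst hk
        simp only [Nat.choose_self, show (n+2-(n+2))/2 = 0 by omega,
          show (n+1+1-(n+1))/2 = 0 by omega, show (n+1-(n+1))/2 = 0 by omega]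
        push_cast
        ring
      · rw [if_neg (by omega), if_neg (by omega), if_neg (by omega)]
        ring
  · rw [if_neg (by omega), if_neg (by omega), if_neg (by omega)]
    ring

theorem dd_zero : dd 0 = 1 := by unfold dd; norm_num

theorem EE_zero_rec (a q : ℚ) (n : ℕ) :
    EE a q (n+2) 0 = q * (n+1) * EE a q n 0 := by
  unfold EE
  by_cases hp : 0 % 2 = n % 2
  · rw [if_pos ⟨by omega, by omega⟩, if_pos ⟨hp, by omega⟩]
    obtain ⟨m, hm⟩ : ∃ m, n = 2*m := ⟨n/2, by omega⟩
    subst hm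
    rw [show (2*m+2-0)/2 = m+1 by omega, show (2*m-0)/2 = m by omega, dd_succ]
    have : (2*(m:ℚ)+1) = (2*m+1 : ℕ) := by push_cast; ring
    simp only [Nat.choose_zero_right]
    push_cast
    ring
  · rw [if_neg (by omega), if_neg (by omega)]
    ring

theorem EE_sum (a q : ℚ) (n N : ℕ) (h : n + 1 ≤ N) :
    ∑ k ∈ Finset.range N, EE a q n k = ∑ k ∈ Finset.range (n+1), EE a q n k := by
  symm
  apply Finset.sum_subset
  · intro x hx
    simp only [Finset.mem_range] at *
    omega
  · intro x _ hx
    simp only [Finset.mem_range] at hx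
    unfold EE
    rw [if_neg (by omega)]

theorem S_rec (a q : ℚ) (n : ℕ) :
    ∑ k ∈ Finset.range (n+3), EE a q (n+2) k =
      a * ∑ k ∈ Finset.range (n+2), EE a q (n+1) k +
      q * (n+1) * ∑ k ∈ Finset.range (n+1), EE a q n k := by
  rw [Finset.sum_range_succ' (EE a q (n+2)) (n+2)]
  have h1 : ∑ k ∈ Finset.range (n+2), EE a q (n+2) (k+1) =
      ∑ k ∈ Finset.range (n+2), (a * EE a q (n+1) k + q * (n+1) * EE a q n (k+1)) :=
    Finset.sum_congr rfl fun k _ => EE_rec a q n k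
  rw [h1, Finset.sum_add_distrib, EE_zero_rec, ← Finset.mul_sum, ← Finset.mul_sum]
  have h2 : ∑ k ∈ Finset.range (n+2), EE a q n (k+1) + EE a q n 0 =
      ∑ k ∈ Finset.range (n+3), EE a q n k := (Finset.sum_range_succ' (EE a q n) (n+2)).symm
  rw [EE_sum a q n (n+3) (by omega)] at h2
  rw [← h2]
  ring

theorem S_eq (c : ℕ) (a : ℚ) (ha : 2 * a = 3 + (-1:ℚ)^c) (n : ℕ) :
    (∑ k ∈ Finset.range (n + 1),
        if k % 2 = n % 2 then
          (n.choose k : ℚ) * (3 + (-1 : ℚ) ^ c) ^ k * (c : ℚ) ^ ((n - k) / 2) *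
            ((n - k).factorial : ℚ) /
            ((2 : ℚ) ^ ((n + k) / 2) * (((n - k) / 2).factorial : ℚ))
        else 0) = ∑ k ∈ Finset.range (n+1), EE a (c : ℚ) n k := by
  refine Finset.sum_congr rfl fun k hk => ?_
  rw [Finset.mem_range] at hk
  by_cases hp : k % 2 = n % 2
  · rw [if_pos hp]
    unfold EE
    rw [if_pos ⟨hp, by omega⟩]
    obtain ⟨m, hm⟩ : ∃ m, n - k = 2*m := ⟨(n-k)/2, by omega⟩
    rw [hm, show (n+k)/2 = k + m by omega, show (2*m)/2 = m by omega, ← ha]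
    unfold dd
    have h1 : ((2*m).factorial : ℚ) ≠ 0 := by exact_mod_cast (2*m).factorial_ne_zero
    have h2 : ((m).factorial : ℚ) ≠ 0 := by exact_mod_cast m.factorial_ne_zero
    have h3 : ((2:ℚ))^m ≠ 0 := by positivity
    have h4 : ((2:ℚ))^k ≠ 0 := by positivity
    rw [pow_add, mul_pow]
    field_simp
  · rw [if_neg hp]
    unfold EE
    rw [if_neg (by tauto)]

noncomputable def aN (c : ℕ) [NeZero c] : ℕ := Nat.card {x : Fin c // x + x = 0}

theorem aN_odd (c : ℕ) [NeZero c] (h : ¬ 2 ∣ c) : aN c = 1 := by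
  unfold aN
  have key : ∀ x : Fin c, x + x = 0 ↔ x = 0 := by
    intro x
    constructor
    · intro hx
      have hv : (x.val + x.val) % c = 0 := by
        have h0 := congrArg Fin.val hx
        rw [Fin.val_add] at h0
        simpa using h0
      have hdvd : c ∣ 2 * x.val := by
        rw [two_mul]
        exact Nat.dvd_of_mod_eq_zero hv
      have hco : Nat.Coprime c 2 := by
        rcases Nat.coprime_or_dvd_of_prime Nat.prime_two c with hco | hd
        · exact hco.symm
        · exact absurd hd h
      have hdx := hco.dvd_of_dvd_mul_left hdvd
      have hz := Nat.eq_zero_of_dvd_of_lt hdx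
      ext
      simp only [Fin.val_zero]
      rcases Nat.eq_zero_or_pos x.val with h0 | h0
      · exact h0
      · exact absurd x.isLt (not_lt.mpr (Nat.le_of_dvd h0 hdx))
    · rintro rfl
      simp
  rw [Nat.card_congr (Equiv.subtypeEquivRight key), Nat.card_eq_fintype_card,
    Fintype.card_subtype_eq]

theorem aN_even (c : ℕ) [NeZero c] (h : 2 ∣ c) : aN c = 2 := by
  obtain ⟨m, rfl⟩ := h
  have hm : 0 < m := by have := NeZero.ne (2*m); omega
  unfold aN
  rw [Nat.card_eq_fintype_card, Fintype.card_subtype]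
  have hmlt : m < 2*m := by omega
  have hfil : Finset.filter (fun x : Fin (2*m) => x + x = 0) Finset.univ =
      {(0 : Fin (2*m)), ⟨m, hmlt⟩} := by
    ext x
    simp only [Finset.mem_filter, Finset.mem_univ, true_and, Finset.mem_insert,
      Finset.mem_singleton]
    constructor
    · intro hx
      have hv : (x.val + x.val) % (2*m) = 0 := by
        have h0 := congrArg Fin.val hx
        rw [Fin.val_add] at h0
        simpa using h0
      have hdvd : 2*m ∣ 2 * x.val := by
        rw [two_mul x.val]
        exact Nat.dvd_of_mod_eq_zero hv
      have hdx : m ∣ x.val := (mul_dvd_mul_iff_left (two_ne_zero)).mp hdvd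
      obtain ⟨t, ht⟩ := hdx
      have hlt := x.isLt
      have ht2 : t < 2 := by
        have : m * t < m * 2 := by omega
        exact (Nat.mul_lt_mul_left hm).mp this
      interval_cases t
      · left; ext; simp only [Fin.val_zero]; omega
      · right; ext; simp; omega
    · rintro (rfl | rfl)
      · simp
      · ext
        rw [Fin.val_add]
        show ((⟨m, hmlt⟩ : Fin (2*m)).val + (⟨m, hmlt⟩ : Fin (2*m)).val) % (2*m) = (0 : Fin (2*m)).val
        simp only [Fin.val_zero]
        rw [show m + m = 2*m by omega]
        exact Nat.mod_self _
  rw [hfil]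
  rw [Finset.card_insert_of_notMem (by
    simp only [Finset.mem_singleton]
    intro hh
    have := congrArg Fin.val hh
    simp only [Fin.val_zero] at this
    omega), Finset.card_singleton]

theorem aN_q (c : ℕ) [NeZero c] : 2 * (aN c : ℚ) = 3 + (-1:ℚ)^c := by
  by_cases h : 2 ∣ c
  · rw [aN_even c h, (even_iff_two_dvd.mpr h).neg_one_pow]
    norm_num
  · rw [aN_odd c h, (Nat.odd_iff.mpr (by omega)).neg_one_pow]
    norm_num


variable (c : ℕ) [NeZero c]

theorem perm_invol {α : Type*} {π : Equiv.Perm α} (h : π * π = 1) (y : α) : π (π y) = y := by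
  rw [← Equiv.Perm.mul_apply, h]; rfl

def Pc {α : Type} (σ : Equiv.Perm α × (α → Fin c)) : Prop :=
  σ.1 * σ.1 = 1 ∧ ∀ i, σ.2 (σ.1 i) = - σ.2 i

variable {α : Type} [DecidableEq α]

theorem removeNone_spec {π : Perm (Option α)} (h0 : π none = none) (a : α) :
    some (Equiv.removeNone π a) = π (some a) := by
  apply Equiv.removeNone_some
  cases hx : π (some a) with
  | none => exact absurd (π.injective (hx.trans h0.symm)) (by simp)
  | some y => exact ⟨y, rfl⟩

def fiberNoneEquiv :
    {σ : Perm (Option α) × (Option α → Fin c) // Pc c σ ∧ σ.1 none = none} ≃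
      ({x : Fin c // x + x = 0} × {σ : Perm α × (α → Fin c) // Pc c σ}) where
  toFun σ := ⟨⟨σ.1.2 none, by
      obtain ⟨⟨⟨h1, h2⟩, h0⟩⟩ := σ.2, trivial
      have := h2 none
      rw [h0] at this
      exact eq_neg_iff_add_eq_zero.mp this⟩,
    ⟨(Equiv.removeNone σ.1.1, σ.1.2 ∘ some), by
      obtain ⟨⟨h1, h2⟩, h0⟩ := σ.2
      constructor
      · ext a
        have : some ((Equiv.removeNone σ.1.1) ((Equiv.removeNone σ.1.1) a)) = some a := by
          rw [removeNone_spec h0, removeNone_spec h0, perm_invol h1]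
        simpa [Equiv.Perm.mul_apply] using Option.some_injective _ this
      · intro a
        have := h2 (some a)
        simpa [Function.comp, removeNone_spec h0] using this⟩⟩
  invFun p := ⟨(Equiv.optionCongr p.2.1.1, fun o => o.elim p.1.1 p.2.1.2), by
    obtain ⟨⟨x, hx⟩, ⟨⟨ρ, g⟩, hρ, hg⟩⟩ := p
    refine ⟨⟨?_, ?_⟩, ?_⟩
    · ext o
      cases o <;> simp [Equiv.Perm.mul_apply, perm_invol hρ]
    · intro i
      cases i with
      | none => simpa using eq_neg_iff_add_eq_zero.mpr hx
      | some a => simpa using hg a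
    · simp⟩
  left_inv := by
    rintro ⟨⟨π, f⟩, ⟨h1, h2⟩, h0⟩
    ext o : 3
    · show Equiv.optionCongr (Equiv.removeNone π) o = π o
      cases o with
      | none => simp [h0]
      | some a =>
        rw [Equiv.optionCongr_apply, Option.map_some]
        exact removeNone_spec h0 a
    · show Option.elim o (f none) (f ∘ some) = f o
      cases o <;> rfl
  right_inv := by
    rintro ⟨⟨x, hx⟩, ⟨⟨ρ, g⟩, hρ, hg⟩⟩
    refine Prod.ext (Subtype.ext rfl) (Subtype.ext ?_)
    refine Prod.ext ?_ rfl
    exact Equiv.removeNone_optionCongr ρ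


theorem getD_spec {o : Option α} (h : o ≠ none) (d : α) : some (o.getD d) = o := by
  cases o <;> simp_all

section FiberSome

variable {j : α} {π : Perm (Option α)}

theorem fs_none (h1 : π * π = 1) (hj : π none = some j) : π (some j) = none := by
  have := perm_invol h1 none; rwa [hj] at this

theorem fs_ne_somej (h1 : π * π = 1) (hj : π none = some j) {y : α} (hy : y ≠ j) :
    π (some y) ≠ some j := by
  intro h
  have := congrArg π h
  rw [perm_invol h1, fs_none h1 hj] at this
  exact (Option.some_ne_none y) this

theorem fs_ne_none' (h1 : π * π = 1) (hj : π none = some j) {y : α} (hy : y ≠ j) :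
    π (some y) ≠ none := by
  intro h
  have := congrArg π h
  rw [perm_invol h1, hj] at this
  exact hy (Option.some_injective _ this)

/-- restriction of an involution with `π none = some j` to `{y // y ≠ j}` -/
def restSome (h1 : π * π = 1) (hj : π none = some j) : Perm {y : α // y ≠ j} :=
  Function.Involutive.toPerm
    (fun y => ⟨(π (some y.1)).getD y.1, fun h => fs_ne_somej h1 hj y.2 (by
        rw [← getD_spec (fs_ne_none' h1 hj y.2) y.1, h])⟩)
    (by
      rintro ⟨y, hy⟩
      have hz : ((π (some y)).getD y) ≠ j := fun h => fs_ne_somej h1 hj hy (by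
        rw [← getD_spec (fs_ne_none' h1 hj hy) y, h])
      apply Subtype.ext
      apply Option.some_injective
      show some ((π (some ((π (some y)).getD y))).getD _) = some y
      rw [getD_spec (fs_ne_none' h1 hj hz), getD_spec (fs_ne_none' h1 hj hy) y,
        perm_invol h1])

theorem restSome_spec (h1 : π * π = 1) (hj : π none = some j) (y : {y : α // y ≠ j}) :
    some ((restSome h1 hj y : {y : α // y ≠ j}) : α) = π (some y.1) := by
  show some (Option.getD _ _) = _
  rw [getD_spec (fs_ne_none' h1 hj y.2) y.1]

end FiberSome

section Ext

variable {j : α}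

/-- extend an involution on `{y // y ≠ j}` to `Option α` with `none ↔ j` swapped -/
def extSome (j : α) (ρ : Perm {y : α // y ≠ j}) (hρ : ρ * ρ = 1) : Perm (Option α) :=
  Function.Involutive.toPerm
    (fun o => o.elim (some j) (fun y => if h : y = j then none else some (ρ ⟨y, h⟩).1))
    (by
      rintro (_ | y)
      · show (if h : j = j then none else _) = none
        simp
      · show Option.elim (if h : y = j then none else some (ρ ⟨y, h⟩).1) _ _ = some y
        by_cases h : y = j
        · simp [h]
        · simp only [h, dif_neg, not_false_iff, Option.elim]
          rw [dif_neg (ρ ⟨y, h⟩).2]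
          have : (⟨(ρ ⟨y, h⟩).1, (ρ ⟨y, h⟩).2⟩ : {y : α // y ≠ j}) = ρ ⟨y, h⟩ := rfl
          rw [this, perm_invol hρ])

theorem extSome_none (ρ : Perm {y : α // y ≠ j}) (hρ : ρ * ρ = 1) :
    extSome j ρ hρ none = some j := rfl

theorem extSome_somej (ρ : Perm {y : α // y ≠ j}) (hρ : ρ * ρ = 1) :
    extSome j ρ hρ (some j) = none := by
  show (if h : j = j then none else _) = none
  simp

theorem extSome_some (ρ : Perm {y : α // y ≠ j}) (hρ : ρ * ρ = 1) {y : α} (h : y ≠ j) :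
    extSome j ρ hρ (some y) = some (ρ ⟨y, h⟩).1 := by
  show (if h : y = j then none else some (ρ ⟨y, h⟩).1) = _
  rw [dif_neg h]

theorem toPerm_invol {β : Type*} (f : β → β) (h : Function.Involutive f) :
    Function.Involutive.toPerm f h * Function.Involutive.toPerm f h = 1 := by
  ext o
  simp only [Equiv.Perm.mul_apply, Equiv.Perm.one_apply, Function.Involutive.coe_toPerm]
  exact h o

theorem extSome_invol (ρ : Perm {y : α // y ≠ j}) (hρ : ρ * ρ = 1) :
    extSome j ρ hρ * extSome j ρ hρ = 1 := toPerm_invol _ _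

end Ext

theorem restSome_invol {j : α} {π : Perm (Option α)} (h1 : π * π = 1) (hj : π none = some j) :
    restSome h1 hj * restSome h1 hj = 1 := toPerm_invol _ _

def fiberSomeEquiv (j : α) :
    {σ : Perm (Option α) × (Option α → Fin c) // Pc c σ ∧ σ.1 none = some j} ≃
      (Fin c × {σ : Perm {y : α // y ≠ j} × ({y : α // y ≠ j} → Fin c) // Pc c σ}) where
  toFun := fun ⟨⟨π, f⟩, hP, hjj⟩ =>
    ⟨f none, ⟨(restSome hP.1 hjj, fun y => f (some y.1)),
      ⟨restSome_invol hP.1 hjj, by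
        intro y
        show f (some ((restSome hP.1 hjj) y).1) = - f (some y.1)
        rw [restSome_spec hP.1 hjj y]
        exact hP.2 (some y.1)⟩⟩⟩
  invFun := fun ⟨x, ⟨⟨ρ, g⟩, hρ, hg⟩⟩ =>
    ⟨(extSome j ρ hρ, fun o => o.elim x (fun y => if h : y = j then -x else g ⟨y, h⟩)),
      ⟨⟨extSome_invol ρ hρ, by
        rintro (_ | y) <;> dsimp only
        · rw [extSome_none]
          simp
        · by_cases h : y = j
          · rw [h, extSome_somej]
            simp
          · rw [extSome_some ρ hρ h]
            simp only [Option.elim_some]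
            rw [dif_neg (ρ ⟨y, h⟩).2, dif_neg h]
            exact hg ⟨y, h⟩⟩, extSome_none ρ hρ⟩⟩
  left_inv := by
    rintro ⟨⟨π, f⟩, ⟨h1, h2⟩, hjj⟩
    apply Subtype.ext
    refine Prod.ext ?_ ?_
    · refine Equiv.ext fun o => ?_
      show extSome j (restSome h1 hjj) (restSome_invol h1 hjj) o = π o
      match o with
      | none => rw [extSome_none, hjj]
      | some y =>
        by_cases h : y = j
        · rw [h, extSome_somej, fs_none h1 hjj]
        · rw [extSome_some _ _ h, restSome_spec h1 hjj ⟨y, h⟩]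
    · funext o
      match o with
      | none => rfl
      | some y =>
        show (if h : y = j then -f none else f (some y)) = f (some y)
        by_cases h : y = j
        · rw [dif_pos h, h]
          have := h2 none
          rw [hjj] at this
          exact this.symm
        · rw [dif_neg h]
  right_inv := by
    rintro ⟨x, ⟨⟨ρ, g⟩, hρ, hg⟩⟩
    refine Prod.ext rfl (Subtype.ext (Prod.ext ?_ ?_))
    · refine Equiv.ext fun y => Subtype.ext ?_
      apply Option.some_injective
      rw [restSome_spec (extSome_invol ρ hρ) (extSome_none ρ hρ) y,
        extSome_some ρ hρ y.2]
    · funext y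
      show (if h : y.1 = j then -x else g ⟨y.1, h⟩) = g y
      rw [dif_neg y.2]

noncomputable def CJ (β : Type) : ℕ := Nat.card {σ : Perm β × (β → Fin c) // Pc c σ}

theorem nat_card_sigma {ι : Type} [Fintype ι] (f : ι → Type) [∀ i, Finite (f i)] :
    Nat.card ((i : ι) × f i) = ∑ i, Nat.card (f i) := by
  letI : ∀ i, Fintype (f i) := fun i => Fintype.ofFinite _
  simp [Nat.card_eq_fintype_card, Fintype.card_sigma]

theorem CJ_option (β : Type) [Fintype β] [DecidableEq β] :
    CJ c (Option β) = Nat.card {x : Fin c // x + x = 0} * CJ c β +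
      c * ∑ j : β, CJ c {y : β // y ≠ j} := by
  classical
  have e1 : {σ : Perm (Option β) × (Option β → Fin c) // Pc c σ} ≃
      Σ i : Option β, {σ : Perm (Option β) × (Option β → Fin c) // Pc c σ ∧ σ.1 none = i} :=
    (Equiv.sigmaFiberEquiv (fun σ' : {σ : Perm (Option β) × (Option β → Fin c) // Pc c σ} =>
        σ'.1.1 none)).symm.trans
      (Equiv.sigmaCongrRight fun i => Equiv.subtypeSubtypeEquivSubtypeInter (Pc c) (fun σ => σ.1 none = i))
  rw [CJ, Nat.card_congr e1, nat_card_sigma, Fintype.sum_option]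
  congr 1
  · rw [Nat.card_congr (fiberNoneEquiv (α := β) c), Nat.card_prod]
    rfl
  · rw [Finset.mul_sum]
    refine Finset.sum_congr rfl fun j _ => ?_
    rw [Nat.card_congr (fiberSomeEquiv (α := β) c j), Nat.card_prod, Nat.card_eq_fintype_card,
      Fintype.card_fin]
    rfl


theorem pc_iff {n : ℕ} (σ : Equiv.Perm (Fin n) × (Fin n → Fin c)) :
    IsColoredInvolution σ ↔ Pc c σ := by
  unfold IsColoredInvolution Pc
  refine and_congr_right fun _ => forall_congr' fun i => ?_
  rw [← Fin.val_add]
  constructor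
  · intro h
    have h0 : σ.2 i + σ.2 (σ.1 i) = 0 := Fin.ext (by simpa using h)
    exact (neg_eq_of_add_eq_zero_right h0).symm
  · intro h
    rw [h]
    simp

theorem CJ_congr {α β : Type} (e : α ≃ β) : CJ c α = CJ c β := by
  refine Nat.card_congr (Equiv.subtypeEquiv
    ((Equiv.permCongr e).prodCongr (Equiv.arrowCongr e (Equiv.refl (Fin c)))) fun σ => ?_)
  obtain ⟨π, f⟩ := σ
  constructor
  · rintro ⟨h1, h2⟩
    refine ⟨?_, ?_⟩
    · ext x
      simp [Equiv.permCongr_apply, Equiv.Perm.mul_apply, perm_invol h1]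
    · intro b
      simpa [Equiv.permCongr_apply] using h2 (e.symm b)
  · rintro ⟨h1, h2⟩
    refine ⟨?_, ?_⟩
    · ext x
      have := perm_invol h1 (e x)
      simp only [Equiv.permCongr_apply, Equiv.prodCongr_apply, Prod.map] at this ⊢
      simp only [Equiv.Perm.mul_apply, Equiv.permCongr_apply] at this ⊢
      simp at this ⊢
      rw [this]
    · intro a
      simpa [Equiv.permCongr_apply] using h2 (e a)

theorem CJ_fin (n : ℕ) : involutionCountC c n = CJ c (Fin n) :=
  Nat.card_congr (Equiv.subtypeEquivRight fun σ => pc_iff c σ)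

theorem CJ_card (α : Type) [Fintype α] : CJ c α = involutionCountC c (Fintype.card α) := by
  rw [CJ_fin, CJ_congr c (Fintype.equivFin α)]

theorem R_rec (n : ℕ) :
    involutionCountC c (n+2) = aN c * involutionCountC c (n+1) +
      c * ((n+1) * involutionCountC c n) := by
  rw [CJ_fin, CJ_congr c (finSuccEquiv (n+1)), CJ_option]
  congr 1
  · rw [← CJ_fin]
    rfl
  · congr 1
    have hj : ∀ j : Fin (n+1), CJ c {y : Fin (n+1) // y ≠ j} = involutionCountC c n := by
      intro j
      rw [CJ_card]
      congr 1
      simp [Fintype.card_subtype_compl]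
    rw [Finset.sum_congr rfl (fun j _ => hj j), Finset.sum_const]
    simp [mul_comm]

theorem R_zero : involutionCountC c 0 = 1 := by
  unfold involutionCountC
  have hall : ∀ σ : Equiv.Perm (Fin 0) × (Fin 0 → Fin c), IsColoredInvolution σ := fun σ =>
    ⟨by ext i; exact i.elim0, fun i => i.elim0⟩
  rw [Nat.card_congr (Equiv.subtypeUnivEquiv hall), Nat.card_prod]
  simp [Nat.card_eq_fintype_card]

theorem R_one : involutionCountC c 1 = aN c := by
  rw [CJ_fin]
  unfold CJ aN
  refine Nat.card_congr ?_
  exact {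
    toFun := fun σ => ⟨σ.1.2 0, by
      obtain ⟨⟨π, f⟩, h1, h2⟩ := σ
      have h0 : π 0 = 0 := Subsingleton.elim _ _
      have h3 := h2 0
      rw [h0] at h3
      exact eq_neg_iff_add_eq_zero.mp h3⟩
    invFun := fun x => ⟨(1, fun _ => x.1), by
      refine ⟨by simp, fun i => ?_⟩
      exact eq_neg_iff_add_eq_zero.mpr x.2⟩
    left_inv := fun σ => Subtype.ext (Prod.ext (Equiv.ext fun i => Subsingleton.elim _ _)
      (funext fun i => congrArg σ.1.2 (Subsingleton.elim _ _)))
    right_inv := fun x => Subtype.ext rfl }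

end CIAux

/-- Closed formula for the number of colored involutions, as an equality of
rational numbers:
`r_n^{(c)} = ∑_{0 ≤ k ≤ n, k ≡ n (mod 2)} C(n,k)·(3+(−1)^c)^k·c^{(n−k)/2}·(n−k)! / (2^{(n+k)/2}·((n−k)/2)!)`. -/
theorem involutionCountC_formula (c n : ℕ) (hc : 1 ≤ c) :
    (involutionCountC c n : ℚ) =
      ∑ k ∈ Finset.range (n + 1),
        if k % 2 = n % 2 then
          (n.choose k : ℚ) * (3 + (-1 : ℚ) ^ c) ^ k * (c : ℚ) ^ ((n - k) / 2) *
            ((n - k).factorial : ℚ) /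
            ((2 : ℚ) ^ ((n + k) / 2) * (((n - k) / 2).factorial : ℚ))
        else 0 := by
  haveI : NeZero c := ⟨by omega⟩
  rw [CIAux.S_eq c (CIAux.aN c : ℚ) (CIAux.aN_q c)]
  suffices H : ∀ m : ℕ, ((involutionCountC c m : ℚ) =
      ∑ k ∈ Finset.range (m+1), CIAux.EE (CIAux.aN c) (c : ℚ) m k) ∧
      ((involutionCountC c (m+1) : ℚ) =
      ∑ k ∈ Finset.range (m+2), CIAux.EE (CIAux.aN c) (c : ℚ) (m+1) k) by
    exact (H n).1
  intro m
  induction m with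
  | zero =>
    constructor
    · rw [CIAux.R_zero]
      norm_num [CIAux.EE, CIAux.dd_zero]
    · rw [CIAux.R_one]
      rw [Finset.sum_range_succ, Finset.sum_range_one]
      norm_num [CIAux.EE, CIAux.dd_zero]
  | succ m ih =>
    refine ⟨ih.2, ?_⟩
    rw [show m + 1 + 1 = m + 2 from rfl, CIAux.R_rec c m,
      show m + 2 + 1 = m + 3 from rfl, CIAux.S_rec]
    push_cast
    rw [← ih.1, ← ih.2]
    ring
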